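/- arXiv:2002.12862 — 5 statements merged into one kernel-verified Lean document; each statement's English description precedes it below -/
import Mathlib

section
/- Suppose that κ < λ are regular uncountable cardinals. If Refl(2, λ) holds (every pair of stationary subsets of λ reflects simultaneously at some ordinal of uncountable cofinality below λ), then there is no □(λ,<κ)-sequence that is not full; that is, every □(λ,<κ)-sequence is full. -/
/-- `α` is a limit point of the set of ordinals `C`:
`α > 0` and `C ∩ α` is unbounded in `α`. -/
def IsLimitPointOf (C : Set Ordinal.{0}) (α : Ordinal.{0}) : Prop :=
  0 < α ∧ ∀ β < α, ∃ γ ∈ C, β < γ ∧ γ < α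

/-- `C` is a club (closed and unbounded) subset of the ordinal `δ`. -/
def IsClubIn (C : Set Ordinal.{0}) (δ : Ordinal.{0}) : Prop :=
  C ⊆ Set.Iio δ ∧ (∀ β < δ, ∃ γ ∈ C, β < γ) ∧ ∀ α < δ, IsLimitPointOf C α → α ∈ C

/-- `S` is stationary in `δ`: `S` meets every club subset of `δ`. -/
def IsStationaryIn (S : Set Ordinal.{0}) (δ : Ordinal.{0}) : Prop :=
  ∀ C, IsClubIn C δ → (S ∩ C).Nonempty

/-- `S` reflects at `α`: `α` has uncountable cofinality and `S ∩ α` is stationary in `α`. -/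
def ReflectsAt (S : Set Ordinal.{0}) (α : Ordinal.{0}) : Prop :=
  Cardinal.aleph0 < α.cof ∧ IsStationaryIn (S ∩ Set.Iio α) α

/-- `𝒞` is a coherent sequence of length `lam`: for every limit `α < lam`, `𝒞 α` is a
nonempty collection of clubs in `α` which coheres at limit points. -/
def IsCoherentSeq (lam : Ordinal.{0}) (𝒞 : Ordinal.{0} → Set (Set Ordinal.{0})) : Prop :=
  ∀ α < lam, Order.IsSuccLimit α →
    (𝒞 α).Nonempty ∧ (∀ C ∈ 𝒞 α, IsClubIn C α) ∧
      ∀ C ∈ 𝒞 α, ∀ β < α, IsLimitPointOf C β → C ∩ Set.Iio β ∈ 𝒞 β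

/-- The coherent sequence `𝒞` has width `< κ`. -/
def HasWidthLT (lam : Ordinal.{0}) (𝒞 : Ordinal.{0} → Set (Set Ordinal.{0}))
    (kappa : Cardinal.{0}) : Prop :=
  ∀ α < lam, Order.IsSuccLimit α → Cardinal.mk ↥(𝒞 α) < Cardinal.lift.{1} kappa

/-- `T` is a thread through the coherent sequence `𝒞` of length `lam`. -/
def IsThread (lam : Ordinal.{0}) (𝒞 : Ordinal.{0} → Set (Set Ordinal.{0}))
    (T : Set Ordinal.{0}) : Prop :=
  IsClubIn T lam ∧ ∀ β < lam, IsLimitPointOf T β → T ∩ Set.Iio β ∈ 𝒞 β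

/-- The sequence `𝒞` is full: for unboundedly many `α < lam` there is a club of
`β < lam` such that `α` is a limit point of some `C ∈ 𝒞 β`. -/
def IsFull (lam : Ordinal.{0}) (𝒞 : Ordinal.{0} → Set (Set Ordinal.{0})) : Prop :=
  ∀ ξ < lam, ∃ α, ξ ≤ α ∧ α < lam ∧
    ∃ D, IsClubIn D lam ∧ ∀ β ∈ D, ∃ C ∈ 𝒞 β, IsLimitPointOf C α

open Ordinal Set Cardinal

theorem lp_mono {C D : Set Ordinal} (h : C ⊆ D) {α : Ordinal}
    (hα : IsLimitPointOf C α) : IsLimitPointOf D α := by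
  refine ⟨hα.1, fun β hβ => ?_⟩
  obtain ⟨γ, hγC, h1, h2⟩ := hα.2 β hβ
  exact ⟨γ, h hγC, h1, h2⟩

theorem lp_isLimit {C : Set Ordinal} {α : Ordinal} (h : IsLimitPointOf C α) :
    Order.IsSuccLimit α := by
  rw [Ordinal.isSuccLimit_iff, Order.isSuccPrelimit_iff_succ_lt]
  refine ⟨pos_iff_ne_zero.mp h.1, fun b hb => ?_⟩
  obtain ⟨γ, _, h1, h2⟩ := h.2 b hb
  exact lt_of_le_of_lt (Order.succ_le_of_lt h1) h2

theorem lp_inter_Iio {C : Set Ordinal} {γ β : Ordinal} (h : γ ≤ β) :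
    IsLimitPointOf (C ∩ Set.Iio β) γ ↔ IsLimitPointOf C γ := by
  constructor
  · exact lp_mono inter_subset_left
  · rintro ⟨h0, hu⟩
    refine ⟨h0, fun y hy => ?_⟩
    obtain ⟨c, hc, h1, h2⟩ := hu y hy
    exact ⟨c, ⟨hc, lt_of_lt_of_le h2 h⟩, h1, h2⟩

theorem clubIn_Iio {δ : Ordinal} (hδ : Order.IsSuccLimit δ) : IsClubIn (Set.Iio δ) δ := by
  refine ⟨subset_rfl, fun β hβ => ⟨Order.succ β, hδ.succ_lt hβ, Order.lt_succ β⟩,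
    fun α hα _ => hα⟩

theorem clubIn_inter_Ioi {C : Set Ordinal} {δ a : Ordinal} (hC : IsClubIn C δ)
    (ha : a < δ) : IsClubIn (C ∩ Set.Ioi a) δ := by
  obtain ⟨hsub, hunb, hcl⟩ := hC
  refine ⟨fun x hx => hsub hx.1, fun β hβ => ?_, fun α hα hlp => ?_⟩
  · obtain ⟨γ, hγ, hγ'⟩ := hunb (max β a) (max_lt hβ ha)
    exact ⟨γ, ⟨hγ, lt_of_le_of_lt (le_max_right _ _) hγ'⟩,
      lt_of_le_of_lt (le_max_left _ _) hγ'⟩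
  · have h1 : IsLimitPointOf C α := lp_mono inter_subset_left hlp
    obtain ⟨c, hc, _, hc2⟩ := hlp.2 0 hlp.1
    exact ⟨hcl α hα h1, lt_trans hc.2 hc2⟩

theorem stationary_inter_Ioi {S : Set Ordinal} {δ a : Ordinal}
    (hS : IsStationaryIn S δ) (ha : a < δ) :
    IsStationaryIn (S ∩ Set.Ioi a) δ := by
  intro C hC
  obtain ⟨x, hxS, hxC⟩ := hS _ (clubIn_inter_Ioi hC ha)
  exact ⟨x, ⟨hxS, hxC.2⟩, hxC.1⟩

theorem omega_lim {δ : Ordinal.{0}} (hδ : ℵ₀ < δ.cof) (g : Ordinal → Ordinal)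
    (hg : ∀ x < δ, x < g x ∧ g x < δ) {a : Ordinal} (ha : a < δ) :
    ∃ b, a < b ∧ b < δ ∧ (∀ n : ℕ, g^[n] a < b) ∧ ∀ y < b, ∃ n : ℕ, y < g^[n] a := by
  have hall : ∀ n : ℕ, g^[n] a < δ := by
    intro n
    induction n with
    | zero => simpa using ha
    | succ n ih =>
      rw [Function.iterate_succ_apply']
      exact (hg _ ih).2
  have hstep : ∀ n : ℕ, g^[n] a < g^[n+1] a := by
    intro n
    rw [Function.iterate_succ_apply']
    exact (hg _ (hall n)).1
  have hbdd : BddAbove (Set.range fun n : ℕ => g^[n] a) := Ordinal.bddAbove_range _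
  set b := ⨆ n : ℕ, g^[n] a with hb
  have hlt : ∀ n : ℕ, g^[n] a < b := fun n =>
    lt_of_lt_of_le (hstep n) (le_ciSup hbdd (n + 1))
  have hbδ : b < δ := by
    apply Ordinal.iSup_lt_ord _ hall
    rwa [Cardinal.mk_eq_aleph0]
  refine ⟨b, ?_, hbδ, hlt, fun y hy => ?_⟩
  · have := hlt 0
    simpa using this
  · rw [hb] at hy
    rwa [lt_ciSup_iff hbdd] at hy

/-- The limit points below `δ` of a club in `δ` form a club in `δ`,
provided `cof δ > ω`. -/
theorem lp_club {C : Set Ordinal.{0}} {δ : Ordinal.{0}} (hδ : ℵ₀ < δ.cof)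
    (hC : IsClubIn C δ) :
    IsClubIn (Set.Iio δ ∩ {γ | IsLimitPointOf C γ}) δ := by
  obtain ⟨hsub, hunb, hcl⟩ := hC
  have hδlim : Order.IsSuccLimit δ := Ordinal.aleph0_le_cof.mp hδ.le
  refine ⟨inter_subset_left, fun ρ hρ => ?_, fun α hα hlp => ?_⟩
  · -- unboundedness
    set g : Ordinal → Ordinal := fun x =>
      if h : x < δ then Classical.choose (hunb x h) else 0 with hgdef
    have hg : ∀ x < δ, x < g x ∧ g x < δ ∧ g x ∈ C := by
      intro x hx
      have hch := Classical.choose_spec (hunb x hx)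
      obtain ⟨h1, h2⟩ := hch
      rw [hgdef]
      simp only [dif_pos hx]
      exact ⟨h2, hsub h1, h1⟩
    obtain ⟨b, hab, hbδ, hnb, hcof⟩ :=
      omega_lim hδ g (fun x hx => ⟨(hg x hx).1, (hg x hx).2.1⟩) hρ
    refine ⟨b, ⟨hbδ, ?_, fun y hy => ?_⟩, hab⟩
    · exact lt_of_le_of_lt (zero_le (a := ρ)) hab
    · obtain ⟨n, hn⟩ := hcof y hy
      have hx : g^[n] ρ < δ := lt_trans (hnb n) hbδ
      refine ⟨g^[n+1] ρ, ?_, ?_, hnb (n+1)⟩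
      · rw [Function.iterate_succ_apply']
        exact (hg _ hx).2.2
      · calc y < g^[n] ρ := hn
          _ < g^[n+1] ρ := by
            rw [Function.iterate_succ_apply']
            exact (hg _ hx).1
  · -- closedness
    refine ⟨hα, hlp.1, fun y hy => ?_⟩
    obtain ⟨γ', hγ', h1, h2⟩ := hlp.2 y hy
    obtain ⟨c, hc, hc1, hc2⟩ := hγ'.2.2 y h1
    exact ⟨c, hc, hc1, lt_trans hc2 h2⟩
/-- If `𝒮` is a collection of fewer than `κ ≤ cof δ` clubs in `δ`, then the clubs
in `𝒮` have a common limit point above any `ρ < δ`. -/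
theorem common_lp {κ : Cardinal.{0}} (hκ : ℵ₀ < κ) {δ : Ordinal.{0}} (hcof : κ ≤ δ.cof)
    (𝒮 : Set (Set Ordinal.{0})) (hcl : ∀ C ∈ 𝒮, IsClubIn C δ)
    (hwd : Cardinal.mk ↥𝒮 < Cardinal.lift.{1} κ)
    {ρ : Ordinal.{0}} (hρ : ρ < δ) :
    ∃ γ, ρ < γ ∧ γ < δ ∧ ∀ C ∈ 𝒮, IsLimitPointOf C γ := by
  have hδcof : ℵ₀ < δ.cof := lt_of_lt_of_le hκ hcof
  have hδlim : Order.IsSuccLimit δ := Ordinal.aleph0_le_cof.mp hδcof.le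
  -- transfer the index set to `Type 0`
  obtain ⟨c, hcκ, hceq⟩ := Cardinal.lt_lift_iff.mp hwd
  have hequiv : Nonempty (↥𝒮 ≃ c.out) := by
    rw [← Cardinal.lift_mk_eq', Cardinal.mk_out, hceq, Cardinal.lift_id']
  obtain ⟨e⟩ := hequiv
  set L : c.out → Set Ordinal.{0} := fun i =>
    Set.Iio δ ∩ {γ | IsLimitPointOf ((e.symm i : ↥𝒮) : Set Ordinal.{0}) γ} with hLdef
  have hLclub : ∀ i, IsClubIn (L i) δ := fun i =>
    lp_club hδcof (hcl _ (e.symm i).2)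
  set nxt : c.out → Ordinal → Ordinal := fun i x => sInf (L i ∩ Set.Ioi x) with hnxtdef
  have hnxt : ∀ (i) (x), x < δ → nxt i x ∈ L i ∧ x < nxt i x := by
    intro i x hx
    have hne : (L i ∩ Set.Ioi x).Nonempty := by
      obtain ⟨γ, hγ, hγ'⟩ := (hLclub i).2.1 x hx
      exact ⟨γ, hγ, hγ'⟩
    have := csInf_mem hne
    exact ⟨this.1, this.2⟩
  set g : Ordinal → Ordinal := fun x => max (Order.succ x) (⨆ i, nxt i x) with hgdef
  have hg : ∀ x < δ, x < g x ∧ g x < δ := by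
    intro x hx
    constructor
    · exact lt_of_lt_of_le (Order.lt_succ x) (le_max_left _ _)
    · apply max_lt (hδlim.succ_lt hx)
      apply Ordinal.iSup_lt_ord
      · rw [Cardinal.mk_out]
        exact lt_of_lt_of_le hcκ hcof
      · intro i
        exact ((hLclub i).1 (hnxt i x hx).1 : _)
  obtain ⟨b, hab, hbδ, hnb, hcof'⟩ := omega_lim hδcof g hg hρ
  refine ⟨b, hab, hbδ, fun C hC => ?_⟩
  set i := e ⟨C, hC⟩ with hi
  have hCi : ((e.symm i : ↥𝒮) : Set Ordinal.{0}) = C := by rw [hi, Equiv.symm_apply_apply]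
  have hblp : IsLimitPointOf (L i) b := by
    refine ⟨lt_of_le_of_lt (zero_le (a := ρ)) hab, fun y hy => ?_⟩
    obtain ⟨n, hn⟩ := hcof' y hy
    have hx : g^[n] ρ < δ := lt_trans (hnb n) hbδ
    refine ⟨nxt i (g^[n] ρ), (hnxt i _ hx).1, lt_trans hn (hnxt i _ hx).2, ?_⟩
    have h1 : nxt i (g^[n] ρ) ≤ g^[n+1] ρ := by
      rw [Function.iterate_succ_apply']
      exact le_trans (le_ciSup (Ordinal.bddAbove_range _) i) (le_max_right _ _)
    exact lt_of_le_of_lt h1 (hnb (n+1))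
  have := (hLclub i).2.2 b hbδ hblp
  rw [← hCi]
  exact this.2
/-- Diagonal intersection of a family of clubs in `lam.ord` is unbounded,
for `lam` regular uncountable. -/
theorem diag_unbounded {lam : Cardinal.{0}} (hlreg : lam.IsRegular)
    (hlunc : Cardinal.aleph0 < lam)
    {ξ₀ : Ordinal.{0}} (hξ₀ : ξ₀ < lam.ord)
    (B : Ordinal.{0} → Set Ordinal.{0})
    (hB : ∀ γ, ξ₀ ≤ γ → γ < lam.ord → IsClubIn (B γ) lam.ord) :
    ∀ a < lam.ord, ∃ b, a < b ∧ b < lam.ord ∧ ξ₀ < b ∧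
      ∀ γ, ξ₀ ≤ γ → γ < b → b ∈ B γ := by
  intro a ha
  have hcofeq : (lam.ord).cof = lam := hlreg.cof_eq
  have hδcof : ℵ₀ < (lam.ord).cof := by rw [hcofeq]; exact hlunc
  have hδlim : Order.IsSuccLimit (lam.ord) := Ordinal.aleph0_le_cof.mp hδcof.le
  set nxtB : Ordinal → Ordinal → Ordinal := fun γ x =>
    if ξ₀ ≤ γ then sInf (B γ ∩ Set.Ioi x) else 0 with hnxtdef
  have hnxt : ∀ γ x, ξ₀ ≤ γ → γ < lam.ord → x < lam.ord →
      nxtB γ x ∈ B γ ∧ x < nxtB γ x := by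
    intro γ x hγ1 hγ2 hx
    have hne : (B γ ∩ Set.Ioi x).Nonempty := by
      obtain ⟨y, hy, hy'⟩ := (hB γ hγ1 hγ2).2.1 x hx
      exact ⟨y, hy, hy'⟩
    have := csInf_mem hne
    rw [hnxtdef]
    simp only [if_pos hγ1]
    exact ⟨this.1, this.2⟩
  set g : Ordinal → Ordinal := fun x =>
    max (Order.succ x) (Ordinal.bsup x (fun γ _ => nxtB γ x)) with hgdef
  have hg : ∀ x < lam.ord, x < g x ∧ g x < lam.ord := by
    intro x hx
    refine ⟨lt_of_lt_of_le (Order.lt_succ x) (le_max_left _ _), ?_⟩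
    apply max_lt (hδlim.succ_lt hx)
    apply Ordinal.bsup_lt_ord
    · rw [hcofeq]
      exact Cardinal.lt_ord.mp hx
    · intro γ hγ
      by_cases hγ1 : ξ₀ ≤ γ
      · exact (hB γ hγ1 (lt_trans hγ hx)).1 (hnxt γ x hγ1 (lt_trans hγ hx) hx).1
      · rw [hnxtdef]; simp only [if_neg hγ1]
        exact hδlim.pos
  obtain ⟨b, hab, hbδ, hnb, hcof'⟩ := omega_lim hδcof g hg (max_lt ha hξ₀ : max a ξ₀ < lam.ord)
  have haξb : ξ₀ < b := lt_of_le_of_lt (le_max_right a ξ₀) hab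
  refine ⟨b, lt_of_le_of_lt (le_max_left a ξ₀) hab, hbδ, haξb, fun γ hγ1 hγ2 => ?_⟩
  have hgl : γ < lam.ord := lt_trans hγ2 hbδ
  -- b is a limit point of B γ
  have hblp : IsLimitPointOf (B γ) b := by
    refine ⟨lt_of_le_of_lt (zero_le (a := _)) hab, fun y hy => ?_⟩
    obtain ⟨n, hn⟩ := hcof' (max y γ) (max_lt hy hγ2)
    set x := g^[n] (max a ξ₀) with hxdef
    have hx : x < lam.ord := lt_trans (hnb n) hbδ
    have hγx : γ < x := lt_of_le_of_lt (le_max_right y γ) hn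
    have hyx : y < x := lt_of_le_of_lt (le_max_left y γ) hn
    refine ⟨nxtB γ x, (hnxt γ x hγ1 hgl hx).1, lt_trans hyx (hnxt γ x hγ1 hgl hx).2, ?_⟩
    have h1 : nxtB γ x ≤ g^[n+1] (max a ξ₀) := by
      rw [Function.iterate_succ_apply', ← hxdef]
      have h2 : nxtB γ x ≤ Ordinal.bsup x (fun γ' _ => nxtB γ' x) :=
        Ordinal.le_bsup (fun γ' (_ : γ' < x) => nxtB γ' x) γ hγx
      exact le_trans h2 (le_max_right _ _)
    exact lt_of_le_of_lt h1 (hnb (n+1))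
  exact (hB γ hγ1 hgl).2.2 b hbδ hblp
/-- From an unbounded subset `D` of `lam.ord` we can extract a limit point `b < lam.ord`
of `D` of cofinality at least `kappa`, for regular `kappa < lam`. -/
theorem exists_high_cof_lp {lam kappa : Cardinal.{0}} (hlreg : lam.IsRegular)
    (hkreg : kappa.IsRegular) (hkl : kappa < lam)
    (D : Set Ordinal.{0})
    (hD : ∀ a < lam.ord, ∃ d, d ∈ D ∧ a < d ∧ d < lam.ord) :
    ∃ b, b < lam.ord ∧ kappa ≤ b.cof ∧ 0 < b ∧
      ∀ y < b, ∃ d ∈ D, y < d ∧ d < b := by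
  have hcofeq : (lam.ord).cof = lam := hlreg.cof_eq
  have hkord : Order.IsSuccLimit kappa.ord := Cardinal.isSuccLimit_ord hkreg.aleph0_le
  set S : Set Ordinal.{0} := D ∪ Set.Ici lam.ord with hSdef
  have hSnb : ¬ BddAbove S := by
    rintro ⟨c, hc⟩
    have h1 : max c lam.ord + 1 ∈ S := Or.inr (show lam.ord ≤ max c lam.ord + 1 from le_trans (le_max_right _ _) (le_of_lt (lt_add_one _)))
    have h2 := hc h1
    have h3 : c < max c lam.ord + 1 := lt_of_le_of_lt (le_max_left _ _) (lt_add_one _)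
    exact absurd h2 (not_le.mpr h3)
  set g : Ordinal → Ordinal := Ordinal.enumOrd S with hgdef
  have hgmono : StrictMono g := Ordinal.enumOrd_strictMono hSnb
  -- each g i for i < kappa.ord lands in D below lam.ord
  have hgD : ∀ i < kappa.ord, g i ∈ D ∧ g i < lam.ord := by
    intro i hi
    induction i using Ordinal.induction with
    | h i IH =>
    have ht : Ordinal.bsup i (fun j _ => g j) < lam.ord := by
      apply Ordinal.bsup_lt_ord
      · rw [hcofeq]
        exact lt_trans (Cardinal.lt_ord.mp hi) hkl
      · intro j hj
        exact (IH j hj (lt_trans hj hi)).2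
    obtain ⟨d, hdD, hd1, hd2⟩ := hD _ ht
    have hle : g i ≤ d := by
      apply Ordinal.enumOrd_le_of_forall_lt (Or.inl hdD)
      intro j hj
      exact lt_of_le_of_lt (Ordinal.le_bsup (fun j (_ : j < i) => g j) j hj) hd1
    have hglt : g i < lam.ord := lt_of_le_of_lt hle hd2
    have hgS := Ordinal.enumOrd_mem hSnb i
    rcases hgS with h | h
    · exact ⟨h, hglt⟩
    · exact absurd hglt (not_lt.mpr h)
  set b : Ordinal := Ordinal.bsup kappa.ord (fun i _ => g i) with hbdef
  have hbl : b < lam.ord := by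
    apply Ordinal.bsup_lt_ord
    · rw [hcofeq, Cardinal.card_ord]
      exact hkl
    · intro i hi
      exact (hgD i hi).2
  have hgb : ∀ i < kappa.ord, g i < b := by
    intro i hi
    have h1 : Order.succ i < kappa.ord := hkord.succ_lt hi
    exact lt_of_lt_of_le (hgmono (Order.lt_succ i))
      (Ordinal.le_bsup (fun i (_ : i < kappa.ord) => g i) _ h1)
  have hbelow : ∀ y < b, ∃ d ∈ D, y < d ∧ d < b := by
    intro y hy
    obtain ⟨i, hi, hyg⟩ := (Ordinal.lt_bsup _).mp hy
    have h1 : Order.succ i < kappa.ord := hkord.succ_lt hi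
    refine ⟨g (Order.succ i), (hgD _ h1).1, lt_trans hyg (hgmono (Order.lt_succ i)), hgb _ h1⟩
  have hbpos : 0 < b := lt_of_le_of_lt (zero_le (a := g 0)) (hgb 0 hkord.pos)
  refine ⟨b, hbl, ?_, hbpos, hbelow⟩
  -- cofinality lower bound
  by_contra hcb
  rw [not_le] at hcb
  obtain ⟨ι, f, hlsub, hmk⟩ := Ordinal.exists_lsub_cof b
  have hj : ∀ i : ι, ∃ j, j < kappa.ord ∧ f i < g j := by
    intro i
    have : f i < b := hlsub ▸ Ordinal.lt_lsub f i
    obtain ⟨j, hj1, hj2⟩ := (Ordinal.lt_bsup _).mp this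
    exact ⟨j, hj1, hj2⟩
  choose j hj1 hj2 using hj
  have hJ : Ordinal.lsub j < kappa.ord := by
    apply Ordinal.lsub_lt_ord
    · rw [hmk, hkreg.cof_eq]
      exact hcb
    · exact hj1
  have hballe : b ≤ g (Ordinal.lsub j) := by
    rw [← hlsub]
    apply Ordinal.lsub_le_iff.mpr
    intro i
    exact lt_of_lt_of_le (hj2 i) (hgmono.monotone (le_of_lt (Ordinal.lt_lsub j i)))
  exact absurd (lt_of_le_of_lt hballe (hgb _ hJ)) (lt_irrefl b)

/-- If `κ < λ` are regular uncountable cardinals and `Refl(2, λ)`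
holds (every pair of stationary subsets of `λ` reflects simultaneously), then every
`□(λ,<κ)`-sequence is full. -/
theorem Refl_two_implies_square_full (kappa lam : Cardinal.{0})
    (hkreg : kappa.IsRegular) (hkunc : Cardinal.aleph0 < kappa)
    (hkl : kappa < lam)
    (hlreg : lam.IsRegular) (hlunc : Cardinal.aleph0 < lam)
    (hrefl : ∀ T₁ T₂ : Set Ordinal.{0}, T₁ ⊆ Set.Iio lam.ord → T₂ ⊆ Set.Iio lam.ord →
      IsStationaryIn T₁ lam.ord → IsStationaryIn T₂ lam.ord →
      ∃ α < lam.ord, ReflectsAt T₁ α ∧ ReflectsAt T₂ α)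
    (𝒞 : Ordinal.{0} → Set (Set Ordinal.{0}))
    (hcoh : IsCoherentSeq lam.ord 𝒞) (hwd : HasWidthLT lam.ord 𝒞 kappa)
    (hnothread : ¬ ∃ T, IsThread lam.ord 𝒞 T) :
    IsFull lam.ord 𝒞 := by
  by_contra hfull
  rw [IsFull] at hfull
  push_neg at hfull
  obtain ⟨ξ₀, hξ₀, hnf⟩ := hfull
  set Sh : Ordinal.{0} → Set Ordinal.{0} := fun γ =>
    {β | β < lam.ord ∧ ∀ C ∈ 𝒞 β, ¬ IsLimitPointOf C γ} with hShdef
  set Gh : Ordinal.{0} → Set Ordinal.{0} := fun γ =>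
    {β | β < lam.ord ∧ Order.IsSuccLimit β ∧ ∀ C ∈ 𝒞 β, IsLimitPointOf C γ} with hGhdef
  -- Step A: each Sh γ is stationary (non-fullness)
  have hSstat : ∀ γ, ξ₀ ≤ γ → γ < lam.ord → IsStationaryIn (Sh γ) lam.ord := by
    intro γ h1 h2 Dc hDc
    obtain ⟨β, hβD, hβprop⟩ := hnf γ h1 h2 Dc hDc
    exact ⟨β, ⟨hDc.1 hβD, hβprop⟩, hβD⟩
  -- Step B: some Gh γ is stationary
  have hGexists : ∃ γ, ξ₀ ≤ γ ∧ γ < lam.ord ∧ IsStationaryIn (Gh γ) lam.ord := by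
    by_contra hno
    push_neg at hno
    have hch : ∀ γ, ∃ Bg : Set Ordinal.{0}, ξ₀ ≤ γ → γ < lam.ord →
        (IsClubIn Bg lam.ord ∧ Gh γ ∩ Bg = ∅) := by
      intro γ
      by_cases h1 : ξ₀ ≤ γ ∧ γ < lam.ord
      · have h2 := hno γ h1.1 h1.2
        rw [IsStationaryIn] at h2
        push_neg at h2
        obtain ⟨Bg, hBg1, hBg2⟩ := h2
        exact ⟨Bg, fun _ _ => ⟨hBg1, hBg2⟩⟩
      · exact ⟨∅, fun ha hb => absurd ⟨ha, hb⟩ h1⟩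
    choose B hB using hch
    have hDunb := diag_unbounded hlreg hlunc hξ₀ B (fun γ h1 h2 => (hB γ h1 h2).1)
    set Dset : Set Ordinal.{0} :=
      {b | ξ₀ < b ∧ b < lam.ord ∧ ∀ γ, ξ₀ ≤ γ → γ < b → b ∈ B γ} with hDsetdef
    have hD : ∀ a < lam.ord, ∃ d, d ∈ Dset ∧ a < d ∧ d < lam.ord := by
      intro a ha
      obtain ⟨b, h1, h2, h3, h4⟩ := hDunb a ha
      exact ⟨b, ⟨h3, h2, h4⟩, h1, h2⟩
    obtain ⟨b, hbl, hbcof, hbpos, hbnear⟩ := exists_high_cof_lp hlreg hkreg hkl Dset hD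
    obtain ⟨d0, hd0D, _, hd0b⟩ := hbnear 0 hbpos
    have hbξ : ξ₀ < b := lt_trans hd0D.1 hd0b
    have hbB : ∀ γ, ξ₀ ≤ γ → γ < b → b ∈ B γ := by
      intro γ h1 h2
      have hgl : γ < lam.ord := lt_trans h2 hbl
      apply (hB γ h1 hgl).1.2.2 b hbl
      refine ⟨hbpos, fun y hy => ?_⟩
      obtain ⟨d, hdD, hd1, hd2⟩ := hbnear (max y γ) (max_lt hy h2)
      exact ⟨d, hdD.2.2 γ h1 (lt_of_le_of_lt (le_max_right y γ) hd1),
        lt_of_le_of_lt (le_max_left y γ) hd1, hd2⟩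
    have hblim : Order.IsSuccLimit b := Ordinal.aleph0_le_cof.mp (le_trans hkreg.aleph0_le hbcof)
    obtain ⟨γ, hγ1, hγ2, hγ3⟩ := common_lp hkunc hbcof (𝒞 b)
      ((hcoh b hbl hblim).2.1) (hwd b hbl hblim) hbξ
    have hmem : b ∈ Gh γ := ⟨hbl, hblim, hγ3⟩
    have h5 := hbB γ (le_of_lt hγ1) hγ2
    have h6 := (hB γ (le_of_lt hγ1) (lt_trans hγ2 hbl)).2
    rw [Set.eq_empty_iff_forall_notMem] at h6
    exact h6 b ⟨hmem, h5⟩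
  obtain ⟨ghat, hg1, hg2, hGstat⟩ := hGexists
  have hSstat' := hSstat ghat hg1 hg2
  -- Step C: reflect the pair (Gh ghat, Sh ghat)
  obtain ⟨δ, hδl, ⟨hcof1, hst1⟩, ⟨hcof2, hst2⟩⟩ := hrefl
    (Gh ghat ∩ Set.Ioi ghat) (Sh ghat ∩ Set.Ioi ghat)
    (fun x hx => hx.1.1) (fun x hx => hx.1.1)
    (stationary_inter_Ioi hGstat hg2) (stationary_inter_Ioi hSstat' hg2)
  have hδlim : Order.IsSuccLimit δ := Ordinal.aleph0_le_cof.mp hcof1.le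
  obtain ⟨hCne, hCclubs, hCcoh⟩ := hcoh δ hδl hδlim
  obtain ⟨C, hC⟩ := hCne
  have hCclub := hCclubs C hC
  -- δ > ghat
  obtain ⟨β₀, hm0, hβ₀δ⟩ := hst2 (Set.Iio δ) (clubIn_Iio hδlim)
  have hδg : ghat < δ := lt_trans hm0.1.2 hβ₀δ
  -- club of limit points of C above ghat
  have hLclub' := clubIn_inter_Ioi (lp_club hcof1 hCclub) hδg
  obtain ⟨β₁, hβ₁T, hβ₁L⟩ := hst1 _ hLclub'
  have hβ₁δ : β₁ < δ := hβ₁L.1.1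
  have hβ₁lp : IsLimitPointOf C β₁ := hβ₁L.1.2
  have hcohβ₁ := hCcoh C hC β₁ hβ₁δ hβ₁lp
  have hγlpC : IsLimitPointOf C ghat :=
    lp_mono Set.inter_subset_left (hβ₁T.1.1.2.2 (C ∩ Set.Iio β₁) hcohβ₁)
  obtain ⟨β₂, hβ₂T, hβ₂L⟩ := hst2 _ hLclub'
  have hβ₂δ : β₂ < δ := hβ₂L.1.1
  have hβ₂lp : IsLimitPointOf C β₂ := hβ₂L.1.2
  have hcohβ₂ := hCcoh C hC β₂ hβ₂δ hβ₂lp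
  apply hβ₂T.1.1.2 (C ∩ Set.Iio β₂) hcohβ₂
  rw [lp_inter_Iio (le_of_lt hβ₂L.2)]
  exact hγlpC
end

section
/- Suppose that λ ≥ ℵ₂ is a regular cardinal and S ⊆ λ is stationary. Then the following are equivalent: (1) uDSR(<λ, S); (2) DSR(<λ, S); (3) OSR(S); (4) for every matrix ⟨S_{α,i} : α < λ, i < j_α⟩ of stationary subsets of S, where j_α < λ for all α < λ, there is an ordinal γ < λ of uncountable cofinality such that S_{α,i} ∩ γ is stationary in γ for all α < γ and all i < j_α. (Consequently sDSR(<λ, S), which lies between (1) and (2), is also equivalent to these.) -/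
/-- `DSR(<κ, S)` for `S ⊆ λ`: for every matrix `⟨S (α,i) : α < λ, i < j α⟩` of stationary
subsets of `S` with `j α` of cardinality `< κ`, there are `γ < λ` of uncountable cofinality
and a club `F ⊆ γ` such that `S (α,i) ∩ γ` is stationary in `γ` for all `α ∈ F`, `i < j α`. -/
def DSR (kappa lam : Cardinal.{0}) (S : Set Ordinal.{0}) : Prop :=
  ∀ (j : Ordinal.{0} → Ordinal.{0}) (T : Ordinal.{0} → Ordinal.{0} → Set Ordinal.{0}),
    (∀ α < lam.ord, (j α).card < kappa) →
    (∀ α < lam.ord, ∀ i < j α, T α i ⊆ S ∧ IsStationaryIn (T α i) lam.ord) →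
    ∃ γ < lam.ord, Cardinal.aleph0 < γ.cof ∧
      ∃ F, IsClubIn F γ ∧
        ∀ α ∈ F, ∀ i < j α, IsStationaryIn (T α i ∩ Set.Iio γ) γ

/-- `sDSR(<κ, S)`: as `DSR(<κ, S)`, but the set `F ⊆ γ` is only required
to be stationary in `γ`. -/
def sDSR (kappa lam : Cardinal.{0}) (S : Set Ordinal.{0}) : Prop :=
  ∀ (j : Ordinal.{0} → Ordinal.{0}) (T : Ordinal.{0} → Ordinal.{0} → Set Ordinal.{0}),
    (∀ α < lam.ord, (j α).card < kappa) →
    (∀ α < lam.ord, ∀ i < j α, T α i ⊆ S ∧ IsStationaryIn (T α i) lam.ord) →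
    ∃ γ < lam.ord, Cardinal.aleph0 < γ.cof ∧
      ∃ F, F ⊆ Set.Iio γ ∧ IsStationaryIn F γ ∧
        ∀ α ∈ F, ∀ i < j α, IsStationaryIn (T α i ∩ Set.Iio γ) γ

/-- `uDSR(<κ, S)`: as `DSR(<κ, S)`, but the set `F ⊆ γ` is only required
to be unbounded in `γ`. -/
def uDSR (kappa lam : Cardinal.{0}) (S : Set Ordinal.{0}) : Prop :=
  ∀ (j : Ordinal.{0} → Ordinal.{0}) (T : Ordinal.{0} → Ordinal.{0} → Set Ordinal.{0}),
    (∀ α < lam.ord, (j α).card < kappa) →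
    (∀ α < lam.ord, ∀ i < j α, T α i ⊆ S ∧ IsStationaryIn (T α i) lam.ord) →
    ∃ γ < lam.ord, Cardinal.aleph0 < γ.cof ∧
      ∃ F, F ⊆ Set.Iio γ ∧ (∀ β < γ, ∃ α ∈ F, β < α) ∧
        ∀ α ∈ F, ∀ i < j α, IsStationaryIn (T α i ∩ Set.Iio γ) γ

/-- `OSR(S)`: for every `λ`-sequence of stationary subsets of `S` there is a `δ < λ` of
uncountable cofinality at which all `S α` with `α < δ` reflect. -/
def OSR (lam : Cardinal.{0}) (S : Set Ordinal.{0}) : Prop :=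
  ∀ T : Ordinal.{0} → Set Ordinal.{0},
    (∀ α < lam.ord, T α ⊆ S ∧ IsStationaryIn (T α) lam.ord) →
    ∃ δ < lam.ord, Cardinal.aleph0 < δ.cof ∧
      ∀ α < δ, IsStationaryIn (T α ∩ Set.Iio δ) δ

private lemma limit_of_cof {δ : Ordinal.{0}} (h : Cardinal.aleph0 < δ.cof) : Order.IsSuccLimit δ :=
  Ordinal.aleph0_le_cof.mp h.le

private lemma stat_mono {A B : Set Ordinal.{0}} {δ : Ordinal.{0}} (hAB : A ⊆ B)
    (h : IsStationaryIn A δ) : IsStationaryIn B δ :=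
  fun C hC => (h C hC).imp fun x hx => ⟨hAB hx.1, hx.2⟩

private lemma isClubIn_Ioo {β δ : Ordinal.{0}} (hδ : Order.IsSuccLimit δ) (hβ : β < δ) :
    IsClubIn (Set.Ioo β δ) δ := by
  refine ⟨fun x hx => hx.2, fun x hx => ?_, fun α hα hlp => ?_⟩
  · refine ⟨max β x + 1, ⟨?_, ?_⟩, ?_⟩
    · exact (le_max_left β x).trans_lt (by rw [Ordinal.add_one_eq_succ]; exact Order.lt_succ _)
    · rw [Ordinal.add_one_eq_succ]; exact hδ.succ_lt (max_lt hβ hx)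
    · exact (le_max_right β x).trans_lt (by rw [Ordinal.add_one_eq_succ]; exact Order.lt_succ _)
  · obtain ⟨γ, hγ, _, hγα⟩ := hlp.2 0 hlp.1
    exact ⟨hγ.1.trans hγα, hα⟩

private lemma club_inter {δ : Ordinal.{0}} (hδ : Cardinal.aleph0 < δ.cof)
    {C D : Set Ordinal.{0}} (hC : IsClubIn C δ) (hD : IsClubIn D δ) :
    IsClubIn (C ∩ D) δ := by
  have hδlim : Order.IsSuccLimit δ := limit_of_cof hδ
  refine ⟨fun x hx => hC.1 hx.1, ?_, ?_⟩
  · intro x hx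
    have step : ∀ y, y < δ → ∃ z, z < δ ∧ y < z ∧
        (∃ c ∈ C, y < c ∧ c < z) ∧ (∃ d ∈ D, y < d ∧ d < z) := by
      intro y hy
      obtain ⟨c, hcC, hyc⟩ := hC.2.1 y hy
      have hcδ : c < δ := hC.1 hcC
      obtain ⟨d, hdD, hcd⟩ := hD.2.1 c hcδ
      have hdδ : d < δ := hD.1 hdD
      have hd1 : d < d + 1 := by rw [Ordinal.add_one_eq_succ]; exact Order.lt_succ d
      refine ⟨d + 1, ?_, hyc.trans (hcd.trans hd1), ⟨c, hcC, hyc, hcd.trans hd1⟩,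
        ⟨d, hdD, hyc.trans hcd, hd1⟩⟩
      rw [Ordinal.add_one_eq_succ]; exact hδlim.succ_lt hdδ
    choose! st hst1 hst2 hst3 hst4 using step
    set f : ℕ → Ordinal.{0} := fun n => Nat.rec x (fun _ ih => st ih) n with hf
    have hfs : ∀ n, f (n + 1) = st (f n) := fun n => rfl
    have hflt : ∀ n, f n < δ := by
      intro n; induction n with
      | zero => exact hx
      | succ n ih => rw [hfs]; exact hst1 _ ih
    have hfmono : ∀ n, f n < f (n + 1) := fun n => by rw [hfs]; exact hst2 _ (hflt n)
    have hσδ : iSup f < δ := by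
      refine Ordinal.iSup_lt_ord ?_ hflt
      rwa [Cardinal.mk_nat]
    have hle : ∀ n, f n ≤ iSup f := fun n => Ordinal.le_iSup f n
    have hx1 : f 0 < iSup f := lt_of_lt_of_le (hfmono 0) (hle (0+1))
    have hσpos : 0 < iSup f := lt_of_le_of_lt (zero_le (a := f 0)) hx1
    have hlpC : IsLimitPointOf C (iSup f) := by
      refine ⟨hσpos, fun b hb => ?_⟩
      obtain ⟨n, hn⟩ := Ordinal.lt_iSup_iff.mp hb
      obtain ⟨c, hcC, hfc, hcz⟩ := hst3 _ (hflt n)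
      exact ⟨c, hcC, hn.trans hfc, hcz.trans_le ((hfs n ▸ hle (n+1)))⟩
    have hlpD : IsLimitPointOf D (iSup f) := by
      refine ⟨hσpos, fun b hb => ?_⟩
      obtain ⟨n, hn⟩ := Ordinal.lt_iSup_iff.mp hb
      obtain ⟨d, hdD, hfd, hdz⟩ := hst4 _ (hflt n)
      exact ⟨d, hdD, hn.trans hfd, hdz.trans_le ((hfs n ▸ hle (n+1)))⟩
    refine ⟨iSup f, ⟨hC.2.2 _ hσδ hlpC, hD.2.2 _ hσδ hlpD⟩, ?_⟩
    exact hx1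
  · intro α hα hlp
    have h1 : IsLimitPointOf C α := ⟨hlp.1, fun b hb => (hlp.2 b hb).imp
      fun γ hγ => ⟨hγ.1.1, hγ.2⟩⟩
    have h2 : IsLimitPointOf D α := ⟨hlp.1, fun b hb => (hlp.2 b hb).imp
      fun γ hγ => ⟨hγ.1.2, hγ.2⟩⟩
    exact ⟨hC.2.2 α hα h1, hD.2.2 α hα h2⟩

private lemma club_stationary {δ : Ordinal.{0}} (hδ : Cardinal.aleph0 < δ.cof)
    {C : Set Ordinal.{0}} (hC : IsClubIn C δ) : IsStationaryIn C δ := by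
  intro D hD
  have h := (club_inter hδ hC hD).2.1 0 (limit_of_cof hδ).pos
  obtain ⟨γ, hγ, _⟩ := h
  exact ⟨γ, hγ⟩

private lemma stat_inter_club {δ : Ordinal.{0}} (hδ : Cardinal.aleph0 < δ.cof)
    {A C : Set Ordinal.{0}} (hA : IsStationaryIn A δ) (hC : IsClubIn C δ) :
    IsStationaryIn (A ∩ C) δ := by
  intro D hD
  obtain ⟨x, hx1, hx2, hx3⟩ := hA _ (club_inter hδ hC hD)
  exact ⟨x, ⟨hx1, hx2⟩, hx3⟩

private lemma stat_unbounded {δ : Ordinal.{0}} (hδ : Cardinal.aleph0 < δ.cof)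
    {A : Set Ordinal.{0}} (hA : IsStationaryIn A δ) :
    ∀ β < δ, ∃ α ∈ A, β < α ∧ α < δ := by
  intro β hβ
  obtain ⟨x, hx1, hx2⟩ := hA _ (isClubIn_Ioo (limit_of_cof hδ) hβ)
  exact ⟨x, hx1, hx2.1, hx2.2⟩

private lemma exists_bound {lam : Cardinal.{0}} (hreg : lam.IsRegular) {o : Ordinal.{0}}
    (ho : o < lam.ord) (f : Ordinal.{0} → Ordinal.{0}) (hf : ∀ x < o, f x < lam.ord) :
    ∃ B < lam.ord, ∀ x < o, f x < B := by
  set g : o.ToType → Ordinal.{0} := fun t => f ((Ordinal.ToType.mk (o := o)).symm t) with hg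
  have hglt : ∀ t, g t < lam.ord := fun t => hf _ ((Ordinal.ToType.mk (o := o)).symm t).2
  have hsup : iSup g < lam.ord := by
    refine Ordinal.iSup_lt_ord ?_ hglt
    rw [Cardinal.mk_toType, hreg.cof_eq]
    exact Cardinal.lt_ord.mp ho
  refine ⟨iSup g + 1, ?_, fun x hx => ?_⟩
  · rw [Ordinal.add_one_eq_succ]
    exact (Cardinal.isSuccLimit_ord hreg.aleph0_le).succ_lt hsup
  · have h1 : f x ≤ iSup g := by
      have h2 := Ordinal.le_iSup g ((Ordinal.ToType.mk (o := o)) ⟨x, hx⟩)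
      simpa [hg] using h2
    have h3 : iSup g < iSup g + 1 := by
      rw [Ordinal.add_one_eq_succ]; exact Order.lt_succ _
    exact h1.trans_lt h3

/-- For a regular cardinal `λ ≥ ℵ₂` and stationary `S ⊆ λ`, the
principles `uDSR(<λ, S)`, `DSR(<λ, S)`, `OSR(S)`, and the diagonal matrix reflection
property (4) are all equivalent; consequently `sDSR(<λ, S)` is equivalent to them too. -/
theorem uDSR_DSR_OSR_equivalences (lam : Cardinal.{0})
    (hlam : Cardinal.aleph 2 ≤ lam) (hreg : lam.IsRegular)
    (S : Set Ordinal.{0}) (hSsub : S ⊆ Set.Iio lam.ord)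
    (hSstat : IsStationaryIn S lam.ord) :
    (uDSR lam lam S ↔ DSR lam lam S) ∧
    (DSR lam lam S ↔ OSR lam S) ∧
    (OSR lam S ↔
      (∀ (j : Ordinal.{0} → Ordinal.{0}) (T : Ordinal.{0} → Ordinal.{0} → Set Ordinal.{0}),
        (∀ α < lam.ord, (j α).card < lam) →
        (∀ α < lam.ord, ∀ i < j α, T α i ⊆ S ∧ IsStationaryIn (T α i) lam.ord) →
        ∃ γ < lam.ord, Cardinal.aleph0 < γ.cof ∧
          ∀ α < γ, ∀ i < j α, IsStationaryIn (T α i ∩ Set.Iio γ) γ)) ∧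
    (sDSR lam lam S ↔ DSR lam lam S) := by
  have hℵ0 : Cardinal.aleph0 < lam := by
    refine lt_of_lt_of_le ?_ hlam
    rw [← Cardinal.aleph_zero]
    exact Cardinal.aleph_lt_aleph.mpr (by norm_num)
  have hlim : Order.IsSuccLimit lam.ord := Cardinal.isSuccLimit_ord hℵ0.le
  have hcof : Cardinal.aleph0 < lam.ord.cof := by rw [hreg.cof_eq]; exact hℵ0
  -- (2) → sDSR
  have hDs : DSR lam lam S → sDSR lam lam S := by
    intro h j T hj hT
    obtain ⟨γ, hγ, hγcof, F, hF, hFT⟩ := h j T hj hT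
    exact ⟨γ, hγ, hγcof, F, hF.1, club_stationary hγcof hF, hFT⟩
  -- sDSR → (1)
  have hsu : sDSR lam lam S → uDSR lam lam S := by
    intro h j T hj hT
    obtain ⟨γ, hγ, hγcof, F, hFsub, hFstat, hFT⟩ := h j T hj hT
    refine ⟨γ, hγ, hγcof, F, hFsub, fun β hβ => ?_, hFT⟩
    obtain ⟨α, hα, hβα, _⟩ := stat_unbounded hγcof hFstat β hβ
    exact ⟨α, hα, hβα⟩
  -- (1) → (3)
  have huO : uDSR lam lam S → OSR lam S := by
    intro h T hT
    obtain ⟨γ, hγ, hγcof, F, hFsub, hFunb, hFT⟩ :=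
      h (fun α => α + 1) (fun _ i => T i)
        (fun α hα => by
          show (α + 1).card < lam
          refine Cardinal.lt_ord.mp ?_
          rw [Ordinal.add_one_eq_succ]; exact hlim.succ_lt hα)
        (fun α hα i hi => by
          have hi' : i < α + 1 := hi
          rw [Ordinal.add_one_eq_succ, Order.lt_succ_iff] at hi'
          exact hT i (hi'.trans_lt hα))
    refine ⟨γ, hγ, hγcof, fun ξ hξ => ?_⟩
    obtain ⟨α, hαF, hξα⟩ := hFunb ξ hξ
    exact hFT α hαF ξ (by
      show ξ < α + 1
      rw [Ordinal.add_one_eq_succ, Order.lt_succ_iff]; exact hξα.le)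
  -- (3) → (4)
  have hOP4 : OSR lam S →
      (∀ (j : Ordinal.{0} → Ordinal.{0}) (T : Ordinal.{0} → Ordinal.{0} → Set Ordinal.{0}),
        (∀ α < lam.ord, (j α).card < lam) →
        (∀ α < lam.ord, ∀ i < j α, T α i ⊆ S ∧ IsStationaryIn (T α i) lam.ord) →
        ∃ γ < lam.ord, Cardinal.aleph0 < γ.cof ∧
          ∀ α < γ, ∀ i < j α, IsStationaryIn (T α i ∩ Set.Iio γ) γ) := by
    intro hOSR j T hj hT
    by_cases hA : ∃ α < lam.ord, ∃ i, i < j α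
    · obtain ⟨α₀, hα₀, i₀, hi₀⟩ := hA
      set A : Set (Ordinal.{0} × Ordinal.{0}) := {q | q.1 < lam.ord ∧ q.2 < j q.1} with hAdef
      have hA0 : ((α₀, i₀) : Ordinal.{0} × Ordinal.{0}) ∈ A := ⟨hα₀, hi₀⟩
      haveI hAne : Nonempty A := ⟨⟨_, hA0⟩⟩
      have hjlt : ∀ q ∈ A, q.2 < lam.ord := fun q hq =>
        hq.2.trans (Cardinal.lt_ord.mpr (hj q.1 hq.1))
      have e1 : A ↪ (Set.Iio lam.ord × Set.Iio lam.ord) := by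
        refine ⟨fun a => (⟨a.1.1, a.2.1⟩, ⟨a.1.2, hjlt a.1 a.2⟩), ?_⟩
        intro a b hab
        apply Subtype.ext
        have h1 : a.1.1 = b.1.1 := congrArg (fun q => (q.1 : Ordinal)) hab
        have h2 : a.1.2 = b.1.2 := congrArg (fun q => (q.2 : Ordinal)) hab
        exact Prod.ext h1 h2
      have hcard : Cardinal.mk (Set.Iio lam.ord × Set.Iio lam.ord) = Cardinal.mk (Set.Iio lam.ord) := by
        rw [Cardinal.mk_prod, Ordinal.mk_Iio_ordinal, Cardinal.card_ord,
          Cardinal.lift_id, ← Cardinal.lift_mul, Cardinal.mul_eq_self hℵ0.le]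
      have e2 : (Set.Iio lam.ord × Set.Iio lam.ord) ≃ Set.Iio lam.ord :=
        Classical.choice (Cardinal.eq.mp hcard)
      set e : A ↪ Set.Iio lam.ord := e1.trans e2.toEmbedding with he
      set g : Set.Iio lam.ord → A := Function.invFun e with hgdef
      have hgsurj : Function.Surjective g := Function.invFun_surjective e.injective
      set bfun : A → Set.Iio lam.ord := Function.surjInv hgsurj with hbfundef
      have hbfun : ∀ a, g (bfun a) = a := Function.surjInv_eq hgsurj
      set p : Ordinal.{0} → Ordinal.{0} × Ordinal.{0} :=
        fun β => if h : β < lam.ord then (g ⟨β, h⟩ : A).1 else (α₀, i₀) with hpdef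
      have hpA : ∀ β, p β ∈ A := by
        intro β
        rw [hpdef]
        dsimp only
        split
        · exact (g _).2
        · exact hA0
      set bb : Ordinal.{0} → Ordinal.{0} → Ordinal.{0} := fun α i =>
        if h : ((α, i) : Ordinal.{0} × Ordinal.{0}) ∈ A then
          (bfun ⟨(α, i), h⟩ : Set.Iio lam.ord).1 else 0 with hbbdef
      have h0lt : (0 : Ordinal.{0}) < lam.ord := Cardinal.lt_ord.mpr
        (by rw [Ordinal.card_zero]; exact Cardinal.aleph0_pos.trans hℵ0)
      have hbb_lt : ∀ α i, bb α i < lam.ord := by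
        intro α i
        rw [hbbdef]
        dsimp only
        split
        · exact (bfun _).2
        · exact h0lt
      have hbbp : ∀ α i, ((α, i) : Ordinal.{0} × Ordinal.{0}) ∈ A → p (bb α i) = (α, i) := by
        intro α i h
        have hval : bb α i = (bfun ⟨(α, i), h⟩ : Set.Iio lam.ord).1 := by
          rw [hbbdef]; exact dif_pos h
        have hb : ((bfun ⟨(α, i), h⟩ : Set.Iio lam.ord) : Ordinal.{0}) < lam.ord := (bfun ⟨(α, i), h⟩).2
        rw [hval, hpdef]
        dsimp only
        rw [dif_pos hb]
        have h2 : (⟨(bfun ⟨(α, i), h⟩ : Set.Iio lam.ord).1, hb⟩ : Set.Iio lam.ord)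
            = bfun ⟨(α, i), h⟩ := rfl
        rw [h2, hbfun]
      set C₁ : Set Ordinal.{0} :=
        {δ | δ < lam.ord ∧ ∀ α < δ, ∀ i < j α, ∃ β < δ, p β = (α, i)} with hC₁def
      -- bound functions
      have hin : ∀ α, α < lam.ord → ∃ B < lam.ord, ∀ i < j α, bb α i < B := fun α hα =>
        exists_bound hreg (Cardinal.lt_ord.mpr (hj α hα)) (bb α) (fun i _ => hbb_lt α i)
      choose! binner hbinner using hin
      have hB : ∀ δ' < lam.ord, ∃ B < lam.ord, ∀ α < δ', ∀ i < j α, bb α i < B := by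
        intro δ' hδ'
        obtain ⟨B, hB1, hB2⟩ := exists_bound hreg hδ' binner
          (fun α hα => (hbinner α (hα.trans hδ')).1)
        exact ⟨B, hB1, fun α hα i hi =>
          ((hbinner α (hα.trans hδ')).2 i hi).trans (hB2 α hα)⟩
      choose! Bf hBf using hB
      have hC₁club : IsClubIn C₁ lam.ord := by
        refine ⟨fun δ hδ => hδ.1, ?_, ?_⟩
        · intro x hx
          set f : ℕ → Ordinal.{0} :=
            fun n => Nat.rec (x + 1) (fun _ ih => max (ih + 1) (Bf ih)) n with hfdef
          have hfs : ∀ n, f (n + 1) = max (f n + 1) (Bf (f n)) := fun n => rfl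
          have hsucclt : ∀ y : Ordinal.{0}, y < lam.ord → y + 1 < lam.ord := by
            intro y hy
            rw [Ordinal.add_one_eq_succ]
            exact hlim.succ_lt hy
          have hflt : ∀ n, f n < lam.ord := by
            intro n
            induction n with
            | zero => exact hsucclt x hx
            | succ n ih =>
              rw [hfs]
              exact max_lt (hsucclt _ ih) (hBf (f n) ih).1
          have hfmono : ∀ n, f n < f (n + 1) := by
            intro n
            rw [hfs]
            refine lt_of_lt_of_le ?_ (le_max_left _ _)
            rw [Ordinal.add_one_eq_succ]
            exact Order.lt_succ _
          have hδlt : iSup f < lam.ord := by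
            refine Ordinal.iSup_lt_ord ?_ hflt
            rw [Cardinal.mk_nat, hreg.cof_eq]
            exact hℵ0
          have hle : ∀ n, f n ≤ iSup f := fun n => Ordinal.le_iSup f n
          refine ⟨iSup f, ⟨hδlt, ?_⟩, ?_⟩
          · intro α hα i hi
            obtain ⟨n, hn⟩ := Ordinal.lt_iSup_iff.mp hα
            have hαlam : α < lam.ord := lt_of_lt_of_le hα hδlt.le
            refine ⟨bb α i, ?_, hbbp α i ⟨hαlam, hi⟩⟩
            have h1 : bb α i < Bf (f n) := (hBf (f n) (hflt n)).2 α hn i hi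
            have h2 : Bf (f n) ≤ f (n + 1) := by rw [hfs]; exact le_max_right _ _
            exact lt_of_lt_of_le h1 (h2.trans (hle (n + 1)))
          · have hx1 : x < f 0 := by
              have : f 0 = x + 1 := rfl
              rw [this, Ordinal.add_one_eq_succ]
              exact Order.lt_succ _
            exact lt_of_lt_of_le hx1 (hle 0)
        · intro δ hδ hlp
          refine ⟨hδ, fun α hα i hi => ?_⟩
          obtain ⟨δ', hδ'C, hαδ', hδ'δ⟩ := hlp.2 α hα
          obtain ⟨β, hβ, hp⟩ := hδ'C.2 α hαδ' i hi
          exact ⟨β, hβ.trans hδ'δ, hp⟩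
      -- apply OSR
      set U : Ordinal.{0} → Set Ordinal.{0} :=
        fun β => T (p β).1 (p β).2 ∩ C₁ with hUdef
      have hU : ∀ β < lam.ord, U β ⊆ S ∧ IsStationaryIn (U β) lam.ord := by
        intro β _
        have h := hT (p β).1 (hpA β).1 (p β).2 (hpA β).2
        exact ⟨Set.inter_subset_left.trans h.1, stat_inter_club hcof h.2 hC₁club⟩
      obtain ⟨δ, hδlt, hδcof, hδstat⟩ := hOSR U hU
      have hδlim : Order.IsSuccLimit δ := limit_of_cof hδcof
      have hδC₁ : δ ∈ C₁ := by
        apply hC₁club.2.2 δ hδlt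
        refine ⟨hδlim.pos, fun β hβ => ?_⟩
        obtain ⟨y, hy1, hy2⟩ := hδstat 0 hδlim.pos (Set.Ioo β δ) (isClubIn_Ioo hδlim hβ)
        exact ⟨y, hy1.1.2, hy2.1, hy2.2⟩
      refine ⟨δ, hδlt, hδcof, fun α hαδ i hi => ?_⟩
      obtain ⟨β, hβδ, hpβ⟩ := hδC₁.2 α hαδ i hi
      refine stat_mono ?_ (hδstat β hβδ)
      intro y hy
      have h1 : T (p β).1 (p β).2 = T α i := by rw [hpβ]
      exact ⟨h1 ▸ hy.1.1, hy.2⟩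
    · push_neg at hA
      refine ⟨(Cardinal.aleph 1).ord, ?_, ?_, ?_⟩
      · exact Cardinal.ord_lt_ord.mpr
          (lt_of_lt_of_le (Cardinal.aleph_lt_aleph.mpr one_lt_two) hlam)
      · rw [Cardinal.isRegular_aleph_one.cof_eq]
        exact Cardinal.aleph0_lt_aleph_one
      · intro α hα i hi
        exfalso
        have hαlam : α < lam.ord := hα.trans (Cardinal.ord_lt_ord.mpr
          (lt_of_lt_of_le (Cardinal.aleph_lt_aleph.mpr one_lt_two) hlam))
        exact absurd hi (not_lt.mpr (hA α hαlam i))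
  -- (4) → (2)
  have hP4D : (∀ (j : Ordinal.{0} → Ordinal.{0})
        (T : Ordinal.{0} → Ordinal.{0} → Set Ordinal.{0}),
        (∀ α < lam.ord, (j α).card < lam) →
        (∀ α < lam.ord, ∀ i < j α, T α i ⊆ S ∧ IsStationaryIn (T α i) lam.ord) →
        ∃ γ < lam.ord, Cardinal.aleph0 < γ.cof ∧
          ∀ α < γ, ∀ i < j α, IsStationaryIn (T α i ∩ Set.Iio γ) γ) → DSR lam lam S := by
    intro h j T hj hT
    obtain ⟨γ, hγ, hγcof, hγT⟩ := h j T hj hT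
    have hγlim : Order.IsSuccLimit γ := limit_of_cof hγcof
    refine ⟨γ, hγ, hγcof, Set.Iio γ, ⟨fun x hx => hx, fun β hβ => ?_, fun α hα _ => hα⟩,
      fun α hα i hi => hγT α hα i hi⟩
    refine ⟨β + 1, ?_, ?_⟩
    · rw [Set.mem_Iio, Ordinal.add_one_eq_succ]
      exact hγlim.succ_lt hβ
    · rw [Ordinal.add_one_eq_succ]
      exact Order.lt_succ _
  have hDO : DSR lam lam S → OSR lam S := fun h => huO (hsu (hDs h))
  have hOD : OSR lam S → DSR lam lam S := fun h => hP4D (hOP4 h)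
  refine ⟨⟨fun h => hOD (huO h), fun h => hsu (hDs h)⟩,
    ⟨hDO, hOD⟩, ⟨hOP4, fun h => hDO (hP4D h)⟩,
    ⟨fun h => hOD (huO (hsu h)), hDs⟩⟩
end

section
/- Suppose that λ ≥ ℵ₂ is a regular cardinal and S ⊆ λ is stationary. If uDSR(<λ, S) holds, then OSR(S) holds: for every sequence ⟨S_α : α < λ⟩ of stationary subsets of S there is an ordinal δ < λ of uncountable cofinality such that for all α < δ, S_α ∩ δ is stationary in δ. -/
/-- For a regular cardinal `λ ≥ ℵ₂` and stationary `S ⊆ λ`,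
`uDSR(<λ, S)` implies `OSR(S)`. -/
theorem uDSR_implies_OSR (lam : Cardinal.{0})
    (hlam : Cardinal.aleph 2 ≤ lam) (hreg : lam.IsRegular)
    (S : Set Ordinal.{0}) (hSsub : S ⊆ Set.Iio lam.ord)
    (hSstat : IsStationaryIn S lam.ord)
    (hudsr : uDSR lam lam S) :
    ∀ T : Ordinal.{0} → Set Ordinal.{0},
      (∀ α < lam.ord, T α ⊆ S ∧ IsStationaryIn (T α) lam.ord) →
      ∃ δ < lam.ord, Cardinal.aleph0 < δ.cof ∧
        ∀ α < δ, IsStationaryIn (T α ∩ Set.Iio δ) δ := by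
  intro T hT
  obtain ⟨γ, hγ, hcof, F, hFsub, hFunb, hFstat⟩ :=
    hudsr (fun α => α) (fun _ i => T i)
      (fun α hα => Cardinal.lt_ord.mp hα)
      (fun α hα i hi => hT i (hi.trans hα))
  refine ⟨γ, hγ, hcof, fun i hi => ?_⟩
  obtain ⟨α, hαF, hiα⟩ := hFunb i hi
  exact hFstat α hαF i hiα
end

section
/- Suppose that λ ≥ ℵ₂ is a regular cardinal and S ⊆ λ is stationary, and that OSR(S) holds. Then for every matrix ⟨S_{α,i} : α < λ, i < j_α⟩ of stationary subsets of S, where j_α < λ for all α < λ, there is an ordinal γ < λ of uncountable cofinality such that S_{α,i} ∩ γ is stationary in γ for all α < γ and all i < j_α. -/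

lemma statIn_mono {A B : Set Ordinal.{0}} {δ} (h : A ⊆ B) (hA : IsStationaryIn A δ) :
    IsStationaryIn B δ := fun C hC => ((hA C hC).mono (Set.inter_subset_inter_left _ h))

lemma Ioo_isClubIn {a δ : Ordinal.{0}} (hδ : Cardinal.aleph0 < δ.cof) (ha : a < δ) :
    IsClubIn (Set.Ioo a δ) δ := by
  have hlim : Order.IsSuccLimit δ := Ordinal.aleph0_le_cof.mp hδ.le
  refine ⟨fun x hx => hx.2, fun β hβ => ?_, fun α hα hlp => ?_⟩
  · refine ⟨max β a + 1, ⟨?_, hlim.succ_lt (max_lt hβ ha)⟩, ?_⟩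
    · exact lt_of_le_of_lt (le_max_right β a) (Order.lt_succ _)
    · exact lt_of_le_of_lt (le_max_left β a) (Order.lt_succ _)
  · obtain ⟨γ, hγ, _, hγα⟩ := hlp.2 0 hlp.1
    -- γ ∈ Ioo a δ, γ < α; get a < γ < α so a < α
    exact ⟨lt_trans hγ.1 hγα, hα⟩

lemma clubIn_inter {C D : Set Ordinal.{0}} {δ} (hδ : Cardinal.aleph0 < δ.cof)
    (hC : IsClubIn C δ) (hD : IsClubIn D δ) : IsClubIn (C ∩ D) δ := by
  classical
  refine ⟨fun x hx => hC.1 hx.1, ?_, fun α hα hlp => ?_⟩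
  swap
  · constructor
    · exact hC.2.2 α hα ⟨hlp.1, fun β hβ => (hlp.2 β hβ).imp fun γ hγ => ⟨hγ.1.1, hγ.2⟩⟩
    · exact hD.2.2 α hα ⟨hlp.1, fun β hβ => (hlp.2 β hβ).imp fun γ hγ => ⟨hγ.1.2, hγ.2⟩⟩
  intro β hβ
  have nxC : ∀ x, x < δ → ∃ y ∈ C, x < y ∧ y < δ := fun x hx => by
    obtain ⟨y, hy, hxy⟩ := hC.2.1 x hx; exact ⟨y, hy, hxy, hC.1 hy⟩
  have nxD : ∀ x, x < δ → ∃ y ∈ D, x < y ∧ y < δ := fun x hx => by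
    obtain ⟨y, hy, hxy⟩ := hD.2.1 x hx; exact ⟨y, hy, hxy, hD.1 hy⟩
  let fC : Ordinal.{0} → Ordinal.{0} := fun x => if h : x < δ then (nxC x h).choose else 0
  let fD : Ordinal.{0} → Ordinal.{0} := fun x => if h : x < δ then (nxD x h).choose else 0
  have hfC : ∀ x, x < δ → fC x ∈ C ∧ x < fC x ∧ fC x < δ := fun x hx => by
    simp only [fC, dif_pos hx]; exact (nxC x hx).choose_spec
  have hfD : ∀ x, x < δ → fD x ∈ D ∧ x < fD x ∧ fD x < δ := fun x hx => by
    simp only [fD, dif_pos hx]; exact (nxD x hx).choose_spec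
  let c : ℕ → Ordinal.{0} := fun n => Nat.rec (fC β) (fun _ x => fC (fD x)) n
  have hc : ∀ n, c n ∈ C ∧ c n < δ := by
    intro n; induction n with
    | zero => exact ⟨(hfC β hβ).1, (hfC β hβ).2.2⟩
    | succ n ih =>
      have h1 := hfD _ ih.2
      have h2 := hfC _ h1.2.2
      exact ⟨h2.1, h2.2.2⟩
  have hstep : ∀ n, c n < fD (c n) ∧ fD (c n) ∈ D ∧ fD (c n) < c (n+1) ∧ c (n+1) < δ := by
    intro n
    have h1 := hfD _ (hc n).2
    have h2 := hfC _ h1.2.2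
    exact ⟨h1.2.1, h1.1, h2.2.1, h2.2.2⟩
  have hmono : ∀ n, c n < c (n+1) := fun n => lt_trans (hstep n).1 (hstep n).2.2.1
  let α := ⨆ n, c n
  have hcle : ∀ n, c n ≤ α := fun n => le_ciSup (Ordinal.bddAbove_range _) n
  have hclt : ∀ n, c n < α := fun n => lt_of_lt_of_le (hmono n) (hcle (n+1))
  have hαδ : α < δ := by
    refine Ordinal.iSup_lt_ord ?_ fun n => (hc n).2
    rwa [Cardinal.mk_eq_aleph0]
  have hβα : β < α := lt_of_lt_of_le (hfC β hβ).2.1 (hcle 0)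
  have h0α : 0 < α := lt_of_le_of_lt (zero_le (a := β)) hβα
  have hlt : ∀ {x : Ordinal.{0}}, x < α → ∃ n, x < c n := by
    intro x hx
    exact Ordinal.lt_iSup_iff.mp hx
  have hαC : α ∈ C := by
    refine hC.2.2 α hαδ ⟨h0α, fun b hb => ?_⟩
    obtain ⟨n, hn⟩ := hlt hb
    exact ⟨c (n+1), (hc (n+1)).1, lt_trans hn (hmono n), hclt (n+1)⟩
  have hαD : α ∈ D := by
    refine hD.2.2 α hαδ ⟨h0α, fun b hb => ?_⟩
    obtain ⟨n, hn⟩ := hlt hb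
    refine ⟨fD (c n), (hstep n).2.1, lt_trans hn (hstep n).1, ?_⟩
    exact lt_of_lt_of_le (hstep n).2.2.1 (hcle (n+1))
  exact ⟨α, ⟨hαC, hαD⟩, hβα⟩

/-- For a regular cardinal `λ ≥ ℵ₂` and stationary `S ⊆ λ`, if
`OSR(S)` holds then every matrix of stationary subsets of `S` with rows of length
`< λ` reflects diagonally at some `γ < λ` of uncountable cofinality. -/
theorem OSR_implies_matrix_reflection (lam : Cardinal.{0})
    (hlam : Cardinal.aleph 2 ≤ lam) (hreg : lam.IsRegular)
    (S : Set Ordinal.{0}) (hSsub : S ⊆ Set.Iio lam.ord)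
    (hSstat : IsStationaryIn S lam.ord)
    (hosr : OSR lam S) :
    ∀ (j : Ordinal.{0} → Ordinal.{0}) (T : Ordinal.{0} → Ordinal.{0} → Set Ordinal.{0}),
      (∀ α < lam.ord, (j α).card < lam) →
      (∀ α < lam.ord, ∀ i < j α, T α i ⊆ S ∧ IsStationaryIn (T α i) lam.ord) →
      ∃ γ < lam.ord, Cardinal.aleph0 < γ.cof ∧
        ∀ α < γ, ∀ i < j α, IsStationaryIn (T α i ∩ Set.Iio γ) γ := by
  intro j T hj hT
  classical
  set Λ := lam.ord with hΛdef
  have hℵ0 : Cardinal.aleph0 < lam :=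
    lt_of_lt_of_le (lt_of_lt_of_le Cardinal.aleph0_lt_aleph_one
      (Cardinal.aleph_le_aleph.mpr one_le_two)) hlam
  have hcofΛ : Λ.cof = lam := hreg.cof_eq
  have hΛcof : Cardinal.aleph0 < Λ.cof := by rw [hcofΛ]; exact hℵ0
  have hΛlim : Order.IsSuccLimit Λ := Cardinal.isSuccLimit_ord hreg.aleph0_le
  have hΛ0 : (0 : Ordinal) < Λ := hΛlim.pos
  -- pairing
  have hmk : Cardinal.mk (Set.Iio Λ × Set.Iio Λ) = Cardinal.mk (Set.Iio Λ) := by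
    have hms : Cardinal.aleph0 ≤ Cardinal.mk (Set.Iio Λ) := by
      rw [Ordinal.mk_Iio_ordinal, Cardinal.card_ord, ← Cardinal.lift_aleph0.{1, 0}]
      exact Cardinal.lift_le.mpr hreg.aleph0_le
    rw [Cardinal.mk_prod]; simp only [Cardinal.lift_id]
    exact Cardinal.mul_eq_self hms
  obtain ⟨e⟩ := Cardinal.eq.mp hmk
  set q : Ordinal.{0} → Ordinal.{0} → Ordinal.{0} := fun a b =>
    if h : a < Λ ∧ b < Λ then (e (⟨a, h.1⟩, ⟨b, h.2⟩) : Ordinal) else 0 with hqdef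
  have hqlt : ∀ a b, q a b < Λ := fun a b => by
    rw [hqdef]; dsimp only; split
    · exact (e _).2
    · exact hΛ0
  have hqinj : ∀ {a b a' b' : Ordinal.{0}}, a < Λ → b < Λ → a' < Λ → b' < Λ →
      q a b = q a' b' → a = a' ∧ b = b' := by
    intro a b a' b' ha hb ha' hb' heq
    rw [hqdef] at heq; dsimp only at heq
    rw [dif_pos ⟨ha, hb⟩, dif_pos ⟨ha', hb'⟩] at heq
    have := e.injective (Subtype.ext heq)
    obtain ⟨h1, h2⟩ := Prod.mk.injEq .. ▸ this
    exact ⟨congrArg Subtype.val h1, congrArg Subtype.val h2⟩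
  have hjΛ : ∀ {a}, a < Λ → j a < Λ := fun {a} ha => Cardinal.lt_ord.mpr (hj a ha)
  -- row suprema
  set Rrow : Ordinal.{0} → Ordinal.{0} := fun a =>
    ⨆ x : (j a).ToType, (q a ((Ordinal.ToType.mk (o := j a)).symm x : Ordinal) + 1) with hRdef
  have hRrow_ge : ∀ {a i}, i < j a → q a i + 1 ≤ Rrow a := by
    intro a i hi
    have := le_ciSup (Ordinal.bddAbove_range
      (fun x : (j a).ToType => (q a ((Ordinal.ToType.mk (o := j a)).symm x : Ordinal) + 1)))
      ((Ordinal.ToType.mk (o := j a)) ⟨i, hi⟩)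
    simpa [hRdef] using this
  have hRrow_lt : ∀ {a}, a < Λ → Rrow a < Λ := by
    intro a ha
    refine Ordinal.iSup_lt_ord ?_ fun x => ?_
    · rw [Cardinal.mk_toType, hcofΛ]; exact hj a ha
    · exact hΛlim.succ_lt (hqlt _ _)
  -- sup of rows below ξ
  set H : Ordinal.{0} → Ordinal.{0} := fun ξ =>
    ⨆ x : ξ.ToType, (Rrow ((Ordinal.ToType.mk (o := ξ)).symm x : Ordinal) + 1) with hHdef
  have hH_ge : ∀ {ξ a}, a < ξ → Rrow a < H ξ := by
    intro ξ a ha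
    have := le_ciSup (Ordinal.bddAbove_range
      (fun x : ξ.ToType => (Rrow ((Ordinal.ToType.mk (o := ξ)).symm x : Ordinal) + 1)))
      ((Ordinal.ToType.mk (o := ξ)) ⟨a, ha⟩)
    simp only [OrderIso.symm_apply_apply] at this
    have h1 : Rrow a < Rrow a + 1 := by
      rw [Ordinal.add_one_eq_succ]; exact Order.lt_succ _
    exact lt_of_lt_of_le h1 this
  have hH_lt : ∀ {ξ}, ξ < Λ → H ξ < Λ := by
    intro ξ hξ
    refine Ordinal.iSup_lt_ord ?_ fun x => ?_
    · rw [Cardinal.mk_toType, hcofΛ]; exact Cardinal.lt_ord.mp hξ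
    · exact hΛlim.succ_lt (hRrow_lt (lt_trans ((Ordinal.ToType.mk (o := ξ)).symm x).2 hξ))
  -- the club of closure points
  set Cset : Set Ordinal.{0} := {ξ | ξ < Λ ∧ ∀ a < ξ, Rrow a < ξ} with hCdef
  have hCclub : IsClubIn Cset Λ := by
    refine ⟨fun x hx => hx.1, ?_, ?_⟩
    · intro β hβ
      set r : ℕ → Ordinal.{0} := fun n => Nat.rec (β + 1) (fun _ x => H x + (x + 1)) n with hrdef
      have hrlt : ∀ n, r n < Λ := by
        intro n; induction n with
        | zero => exact hΛlim.succ_lt hβ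
        | succ n ih =>
          rw [Cardinal.lt_ord, show r (n+1) = H (r n) + (r n + 1) from rfl, Ordinal.card_add]
          exact Cardinal.add_lt_of_lt hreg.aleph0_le (Cardinal.lt_ord.mp (hH_lt ih))
            (Cardinal.lt_ord.mp (hΛlim.succ_lt ih))
      have hrmono : ∀ n, r n < r (n + 1) := by
        intro n
        calc r n < r n + 1 := by rw [Ordinal.add_one_eq_succ]; exact Order.lt_succ _
          _ ≤ H (r n) + (r n + 1) := le_add_self
          _ = r (n + 1) := rfl
      set ξs := ⨆ n, r n with hξdef
      have hrle : ∀ n, r n ≤ ξs := fun n => le_ciSup (Ordinal.bddAbove_range _) n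
      have hξΛ : ξs < Λ := Ordinal.iSup_lt_ord (by rwa [Cardinal.mk_eq_aleph0]) hrlt
      have hβ0 : β < β + 1 := by rw [Ordinal.add_one_eq_succ]; exact Order.lt_succ β
      refine ⟨ξs, ⟨hξΛ, fun a ha => ?_⟩, lt_of_lt_of_le hβ0 (hrle 0)⟩
      obtain ⟨n, hn⟩ := Ordinal.lt_iSup_iff.mp ha
      calc Rrow a < H (r n) := hH_ge hn
        _ ≤ H (r n) + (r n + 1) := le_self_add
        _ = r (n + 1) := rfl
        _ ≤ ξs := hrle (n + 1)
    · intro α hα hlp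
      refine ⟨hα, fun a ha => ?_⟩
      obtain ⟨c, hc, hac, hcα⟩ := hlp.2 a ha
      exact lt_trans (hc.2 a hac) hcα
  have hstatC : ∀ {X : Set Ordinal.{0}}, IsStationaryIn X Λ →
      IsStationaryIn (X ∩ Cset) Λ := by
    intro X hX Cl hCl
    obtain ⟨x, hx⟩ := hX _ (clubIn_inter hΛcof hCclub hCl)
    exact ⟨x, ⟨hx.1, hx.2.1⟩, hx.2.2⟩
  -- the OSR sequence
  set U : Ordinal.{0} → Set Ordinal.{0} := fun β =>
    if h : ∃ p : Set.Iio Λ × Set.Iio Λ, q p.1 p.2 = β ∧ (p.2 : Ordinal) < j p.1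
    then T h.choose.1 h.choose.2 ∩ Cset else S ∩ Cset with hUdef
  have hUC : ∀ β, U β ⊆ Cset := by
    intro β; rw [hUdef]; dsimp only; split
    · exact fun x hx => hx.2
    · exact fun x hx => hx.2
  have hUhyp : ∀ β < Λ, U β ⊆ S ∧ IsStationaryIn (U β) Λ := by
    intro β hβ
    rw [hUdef]; dsimp only; split
    · rename_i h
      have hp := h.choose_spec
      have := hT h.choose.1 h.choose.1.2 h.choose.2 hp.2
      exact ⟨fun x hx => this.1 hx.1, hstatC this.2⟩
    · exact ⟨fun x hx => hx.1, hstatC hSstat⟩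
  obtain ⟨δ, hδΛ, hδcof, hδrefl⟩ := hosr U hUhyp
  have hδlim : Order.IsSuccLimit δ := Ordinal.aleph0_le_cof.mp hδcof.le
  have hδC : δ ∈ Cset := by
    refine ⟨hδΛ, fun a ha => ?_⟩
    obtain ⟨x, hx⟩ := hδrefl 0 hδlim.pos _ (Ioo_isClubIn hδcof ha)
    exact lt_trans ((hUC 0 hx.1.1).2 a hx.2.1) hx.2.2
  refine ⟨δ, hδΛ, hδcof, fun α hα i hi => ?_⟩
  have hαΛ : α < Λ := lt_trans hα hδΛ
  have hiΛ : i < Λ := lt_trans hi (hjΛ hαΛ)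
  have hqδ : q α i < δ := by
    have h1 : q α i < q α i + 1 := by
      rw [Ordinal.add_one_eq_succ]; exact Order.lt_succ _
    exact lt_of_lt_of_le h1 ((hRrow_ge hi).trans (hδC.2 α hα).le)
  have hstat := hδrefl (q α i) hqδ
  have hex : ∃ p : Set.Iio Λ × Set.Iio Λ, q p.1 p.2 = q α i ∧ (p.2 : Ordinal) < j p.1 :=
    ⟨(⟨α, hαΛ⟩, ⟨i, hiΛ⟩), rfl, hi⟩
  have hUsub : U (q α i) ⊆ T α i := by
    rw [hUdef]; dsimp only; rw [dif_pos hex]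
    obtain ⟨h1, _⟩ := hex.choose_spec
    obtain ⟨ha, hb⟩ := hqinj hex.choose.1.2 hex.choose.2.2 hαΛ hiΛ h1
    rw [ha, hb]
    exact fun x hx => hx.1
  exact statIn_mono (Set.inter_subset_inter_left _ hUsub) hstat
end

section
/- Let λ be a regular uncountable cardinal and let ⟨S_α : α < λ⟩ be a sequence of subsets of λ. Let 𝕋 be the partial order whose conditions are pairs t = (c^t, d^t) where c^t is an ω-closed bounded subset of λ and d^t is a function with domain c^t such that for all α ∈ c^t, d^t(α) is a closed bounded subset of λ with d^t(α) ∩ S_α = ∅; and s ≤ t iff c^s end-extends c^t and, for all α ∈ c^t, d^s(α) end-extends d^t(α). For t ∈ 𝕋 and ε < λ, let t \ ε denote the condition (c^t \ ε, d^t ↾ (c^t \ ε)), and define π_{t,ε} on 𝕋/t (the set of conditions extending t) by π_{t,ε}(s) = s \ ε. If t ∈ 𝕋, ε < λ, and c^t \ ε is non-empty, then π_{t,ε} is a projection from 𝕋/t to 𝕋/(t \ ε): it is order-preserving, it maps t to t \ ε, and for all s ∈ 𝕋/t and all r ≤ s \ ε there is s* ≤ s such that s* \ ε ≤ r. -/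
/-- `X` is an `ω`-closed set of ordinals: whenever `α` has cofinality `ω` and
`sup (X ∩ α) = α`, we have `α ∈ X`. -/
def OmegaClosed (X : Set Ordinal.{0}) : Prop :=
  ∀ α : Ordinal.{0}, α.cof = Cardinal.aleph0 → sSup (X ∩ Set.Iio α) = α → α ∈ X

/-- `D` is a closed set of ordinals: it contains all of its limit points. -/
def IsClosedSetOfOrdinals (D : Set Ordinal.{0}) : Prop :=
  ∀ α, IsLimitPointOf D α → α ∈ D

/-- `c'` end-extends `c`: `c' ∩ sup {ξ + 1 : ξ ∈ c} = c`. -/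
def EndExtends (c' c : Set Ordinal.{0}) : Prop :=
  c' ∩ {ξ : Ordinal.{0} | ∃ η ∈ c, ξ ≤ η} = c

/-- `(c, d)` is a condition of the poset `𝕋` (relative to `⟨S α : α < λ⟩`): `c` is an
`ω`-closed bounded subset of `λ`, and for every `α ∈ c`, `d α` is a closed bounded
subset of `λ` disjoint from `S α`. -/
def IsTCond (lam : Ordinal.{0}) (S : Ordinal.{0} → Set Ordinal.{0})
    (c : Set Ordinal.{0}) (d : Ordinal.{0} → Set Ordinal.{0}) : Prop :=
  OmegaClosed c ∧ c ⊆ Set.Iio lam ∧ (∃ b < lam, ∀ ξ ∈ c, ξ ≤ b) ∧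
    ∀ α ∈ c, IsClosedSetOfOrdinals (d α) ∧ d α ⊆ Set.Iio lam ∧
      (∃ b < lam, ∀ ξ ∈ d α, ξ ≤ b) ∧ d α ∩ S α = ∅

/-- The order of the poset `𝕋`: `(c₂, d₂) ≤ (c₁, d₁)` iff `c₂` end-extends `c₁` and,
for all `α ∈ c₁`, `d₂ α` end-extends `d₁ α`. -/
def TLe (c₂ : Set Ordinal.{0}) (d₂ : Ordinal.{0} → Set Ordinal.{0})
    (c₁ : Set Ordinal.{0}) (d₁ : Ordinal.{0} → Set Ordinal.{0}) : Prop :=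
  EndExtends c₂ c₁ ∧ ∀ α ∈ c₁, EndExtends (d₂ α) (d₁ α)

theorem endExtends_refl (c : Set Ordinal.{0}) : EndExtends c c := by
  ext ξ
  exact ⟨fun h => h.1, fun h => ⟨h, ξ, h, le_rfl⟩⟩

theorem endExtends_subset {c' c : Set Ordinal.{0}} (h : EndExtends c' c) : c ⊆ c' := by
  intro ξ hξ
  rw [← h] at hξ
  exact hξ.1

theorem endExtends_sdiff {c' c : Set Ordinal.{0}} (ε : Ordinal.{0}) (h : EndExtends c' c) :
    EndExtends (c' \ Set.Iio ε) (c \ Set.Iio ε) := by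
  ext ξ
  constructor
  · rintro ⟨⟨hξc', hξε⟩, η, ⟨hηc, hηε⟩, hle⟩
    have : ξ ∈ c' ∩ {ξ | ∃ η ∈ c, ξ ≤ η} := ⟨hξc', η, hηc, hle⟩
    rw [h] at this
    exact ⟨this, hξε⟩
  · rintro ⟨hξc, hξε⟩
    exact ⟨⟨endExtends_subset h hξc, hξε⟩, ξ, ⟨hξc, hξε⟩, le_rfl⟩

theorem sSup_inter_Iio_le (X : Set Ordinal.{0}) (α : Ordinal.{0}) :
    sSup (X ∩ Set.Iio α) ≤ α :=
  csSup_le' (fun _ hξ => le_of_lt hξ.2)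

theorem omegaClosed_sdiff {X : Set Ordinal.{0}} (ε : Ordinal.{0}) (h : OmegaClosed X) :
    OmegaClosed (X \ Set.Iio ε) := by
  intro α hcof hsup
  have hα0 : α ≠ 0 := by
    intro h0
    rw [h0, Ordinal.cof_zero] at hcof
    exact Cardinal.aleph0_ne_zero hcof.symm
  have hnon : ((X \ Set.Iio ε) ∩ Set.Iio α).Nonempty := by
    by_contra hemp
    rw [Set.not_nonempty_iff_eq_empty] at hemp
    rw [hemp, csSup_empty] at hsup
    exact hα0 (by simpa using hsup.symm)
  obtain ⟨ξ, ⟨hξX, hξε⟩, hξα⟩ := hnon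
  have hεα : α ∉ Set.Iio ε := fun hαε => hξε (show ξ < ε from lt_trans hξα hαε)
  have hbdd : BddAbove (X ∩ Set.Iio α) := ⟨α, fun x hx => le_of_lt hx.2⟩
  have h1 : sSup (X ∩ Set.Iio α) = α := by
    apply le_antisymm (sSup_inter_Iio_le X α)
    calc α = sSup ((X \ Set.Iio ε) ∩ Set.Iio α) := hsup.symm
      _ ≤ sSup (X ∩ Set.Iio α) :=
        csSup_le_csSup hbdd ⟨ξ, ⟨hξX, hξε⟩, hξα⟩ (fun x hx => ⟨hx.1.1, hx.2⟩)
  exact ⟨h α hcof h1, hεα⟩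

theorem isTCond_sdiff {lam : Ordinal.{0}} {S : Ordinal.{0} → Set Ordinal.{0}}
    {c : Set Ordinal.{0}} {d : Ordinal.{0} → Set Ordinal.{0}}
    (ht : IsTCond lam S c d) (ε : Ordinal.{0}) :
    IsTCond lam S (c \ Set.Iio ε) d := by
  obtain ⟨h1, h2, h3, h4⟩ := ht
  exact ⟨omegaClosed_sdiff ε h1, fun ξ hξ => h2 hξ.1,
    h3.imp (fun b hb => ⟨hb.1, fun ξ hξ => hb.2 ξ hξ.1⟩),
    fun α hα => h4 α hα.1⟩

theorem tLe_sdiff {c₂ c₁ : Set Ordinal.{0}} {d₂ d₁ : Ordinal.{0} → Set Ordinal.{0}}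
    (ε : Ordinal.{0}) (h : TLe c₂ d₂ c₁ d₁) :
    TLe (c₂ \ Set.Iio ε) d₂ (c₁ \ Set.Iio ε) d₁ :=
  ⟨endExtends_sdiff ε h.1, fun α hα => h.2 α hα.1⟩

/-- Let `λ` be regular uncountable, `⟨S α : α < λ⟩` a sequence of
subsets of `λ`, and `𝕋` the poset of conditions `(c, d)` described in `IsTCond`/`TLe`.
If `t = (c, d)` is a condition, `ε < λ`, and `c \ ε ≠ ∅`, then the map
`π (s) = s \ ε` is a projection from `𝕋/t` to `𝕋/(t \ ε)`: `t \ ε` is a condition,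
`π` maps `𝕋/t` into `𝕋/(t \ ε)` (and maps `t` to `t \ ε`), `π` is order-preserving,
and for every `s ∈ 𝕋/t` and every `r ≤ s \ ε` there is `s* ≤ s` with `s* \ ε ≤ r`. -/
theorem projection_claim (lam : Cardinal.{0})
    (hreg : lam.IsRegular) (hunc : Cardinal.aleph0 < lam)
    (S : Ordinal.{0} → Set Ordinal.{0})
    (hS : ∀ α < lam.ord, S α ⊆ Set.Iio lam.ord)
    (c : Set Ordinal.{0}) (d : Ordinal.{0} → Set Ordinal.{0})
    (ht : IsTCond lam.ord S c d)
    (ε : Ordinal.{0}) (hε : ε < lam.ord)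
    (hne : (c \ Set.Iio ε).Nonempty) :
    IsTCond lam.ord S (c \ Set.Iio ε) d ∧
    (∀ cs ds, IsTCond lam.ord S cs ds → TLe cs ds c d →
      IsTCond lam.ord S (cs \ Set.Iio ε) ds ∧
        TLe (cs \ Set.Iio ε) ds (c \ Set.Iio ε) d) ∧
    (∀ cs ds cs' ds', IsTCond lam.ord S cs ds → TLe cs ds c d →
      IsTCond lam.ord S cs' ds' → TLe cs' ds' c d → TLe cs' ds' cs ds →
      TLe (cs' \ Set.Iio ε) ds' (cs \ Set.Iio ε) ds) ∧
    (∀ cs ds, IsTCond lam.ord S cs ds → TLe cs ds c d →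
      ∀ cr dr, IsTCond lam.ord S cr dr → TLe cr dr (cs \ Set.Iio ε) ds →
        ∃ cst dst, IsTCond lam.ord S cst dst ∧ TLe cst dst cs ds ∧
          TLe (cst \ Set.Iio ε) dst cr dr) := by
  classical
  refine ⟨isTCond_sdiff ht ε, fun cs ds hs hst => ⟨isTCond_sdiff hs ε, tLe_sdiff ε hst⟩,
    fun cs ds cs' ds' _ _ _ _ h => tLe_sdiff ε h, ?_⟩
  intro cs ds hs hst cr dr hr hrs
  -- setup
  have hcsub : c ⊆ cs := endExtends_subset hst.1
  have hcsne : (cs \ Set.Iio ε).Nonempty := hne.mono (fun ξ hξ => ⟨hcsub hξ.1, hξ.2⟩)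
  obtain ⟨η0, hη0cs, hη0ε⟩ := hcsne
  have hsubr : cs \ Set.Iio ε ⊆ cr := endExtends_subset hrs.1
  have hcrub : ∀ ξ ∈ cr, ξ ∉ Set.Iio ε := by
    intro ξ hξ hlt
    have : ξ ∈ cr ∩ {ξ | ∃ η ∈ cs \ Set.Iio ε, ξ ≤ η} :=
      ⟨hξ, η0, ⟨hη0cs, hη0ε⟩, le_of_lt (lt_of_lt_of_le hlt (not_lt.mp hη0ε))⟩
    rw [hrs.1] at this
    exact this.2 hlt
  set cst : Set Ordinal.{0} := (cs ∩ Set.Iio ε) ∪ cr with hcst_def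
  set dst : Ordinal.{0} → Set Ordinal.{0} := fun α => if α ∈ cr then dr α else ds α with hdst_def
  have hcst_sdiff : cst \ Set.Iio ε = cr := by
    ext ξ
    constructor
    · rintro ⟨hξ, hξε⟩
      rcases hξ with ⟨_, h'⟩ | h'
      · exact absurd h' hξε
      · exact h'
    · intro hξ
      exact ⟨Or.inr hξ, hcrub ξ hξ⟩
  have hEE : EndExtends cst cs := by
    ext ξ
    constructor
    · rintro ⟨hξ, η, hηcs, hle⟩
      rcases hξ with ⟨hξcs, _⟩ | hξcr
      · exact hξcs
      · have hηε : η ∉ Set.Iio ε := fun h => hcrub ξ hξcr (lt_of_le_of_lt hle h)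
        have : ξ ∈ cr ∩ {ξ | ∃ η ∈ cs \ Set.Iio ε, ξ ≤ η} := ⟨hξcr, η, ⟨hηcs, hηε⟩, hle⟩
        rw [hrs.1] at this
        exact this.1
    · intro hξcs
      refine ⟨?_, ξ, hξcs, le_rfl⟩
      by_cases hξε : ξ < ε
      · exact Or.inl ⟨hξcs, hξε⟩
      · exact Or.inr (hsubr ⟨hξcs, hξε⟩)
  have homega : OmegaClosed cst := by
    intro α hcof hsup
    by_cases hαε : α ≤ ε
    · have hset : cst ∩ Set.Iio α = cs ∩ Set.Iio α := by
        ext ξ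
        constructor
        · rintro ⟨hξ, hξα⟩
          rcases hξ with ⟨hξcs, _⟩ | hξcr
          · exact ⟨hξcs, hξα⟩
          · exact absurd (lt_of_lt_of_le hξα hαε) (hcrub ξ hξcr)
        · rintro ⟨hξcs, hξα⟩
          exact ⟨Or.inl ⟨hξcs, lt_of_lt_of_le hξα hαε⟩, hξα⟩
      rw [hset] at hsup
      have hαcs := hs.1 α hcof hsup
      by_cases h' : α < ε
      · exact Or.inl ⟨hαcs, h'⟩
      · exact Or.inr (hsubr ⟨hαcs, h'⟩)
    · push_neg at hαε
      have hbdd : BddAbove (cr ∩ Set.Iio α) := ⟨α, fun x hx => le_of_lt hx.2⟩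
      have hle : α ≤ max ε (sSup (cr ∩ Set.Iio α)) := by
        conv_lhs => rw [← hsup]
        apply csSup_le'
        rintro ξ ⟨hξ, hξα⟩
        rcases hξ with ⟨_, hξε⟩ | hξcr
        · exact le_max_of_le_left (le_of_lt hξε)
        · exact le_max_of_le_right (le_csSup hbdd ⟨hξcr, hξα⟩)
      have h2 : α ≤ sSup (cr ∩ Set.Iio α) := by
        rcases le_total ε (sSup (cr ∩ Set.Iio α)) with h' | h'
        · rwa [max_eq_right h'] at hle
        · rw [max_eq_left h'] at hle
          exact absurd (lt_of_le_of_lt hle hαε) (lt_irrefl α)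
      exact Or.inr (hr.1 α hcof (le_antisymm (sSup_inter_Iio_le cr α) h2))
  have hcond : IsTCond lam.ord S cst dst := by
    refine ⟨homega, ?_, ?_, ?_⟩
    · rintro ξ (⟨hξcs, _⟩ | hξcr)
      · exact hs.2.1 hξcs
      · exact hr.2.1 hξcr
    · obtain ⟨b1, hb1, hb1'⟩ := hs.2.2.1
      obtain ⟨b2, hb2, hb2'⟩ := hr.2.2.1
      refine ⟨max b1 b2, max_lt hb1 hb2, ?_⟩
      rintro ξ (⟨hξcs, _⟩ | hξcr)
      · exact le_max_of_le_left (hb1' ξ hξcs)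
      · exact le_max_of_le_right (hb2' ξ hξcr)
    · intro α hα
      by_cases hαcr : α ∈ cr
      · simpa [hdst_def, hαcr] using hr.2.2.2 α hαcr
      · have hαcs : α ∈ cs := by
          rcases hα with ⟨hαcs, _⟩ | h'
          · exact hαcs
          · exact absurd h' hαcr
        simpa [hdst_def, hαcr] using hs.2.2.2 α hαcs
  refine ⟨cst, dst, hcond, ⟨hEE, ?_⟩, ?_⟩
  · intro α hαcs
    by_cases hαcr : α ∈ cr
    · have : α ∈ cs \ Set.Iio ε := ⟨hαcs, hcrub α hαcr⟩
      simpa [hdst_def, hαcr] using hrs.2 α this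
    · simpa [hdst_def, hαcr] using endExtends_refl (ds α)
  · rw [hcst_sdiff]
    refine ⟨endExtends_refl cr, ?_⟩
    intro α hαcr
    simpa [hdst_def, hαcr] using endExtends_refl (dr α)
end
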